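/- Let p_X ∈ G[0,1]^1_n have weights w_k and breakpoints 0 = t_0 < ⋯ < t_n = 1, and let f(x) = Σ_{i=0}^{n−1} a_i · max(0, x − b_i) with a_0 = 1/w_0, a_i = 1/w_i − 1/w_{i−1}, b_0 = 0, b_i = Σ_{j=0}^{i−1}(t_{j+1}−t_j)w_j. Then for each i ∈ {0,…,n−1}, f is affine on the interval I_i = [b_i, b_{i+1}] with slope 1/w_i, and f maps I_i onto the interval [t_i, t_{i+1}]; moreover ∪_{i=0}^{n−1} I_i = [0,1]. -/

import Mathlib

open MeasureTheory Matrix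

lemma union_consecutive_Icc (b : ℕ → ℝ) : ∀ n, 0 < n → (∀ i < n, b i ≤ b (i+1)) →
    (⋃ i ∈ Finset.range n, Set.Icc (b i) (b (i+1))) = Set.Icc (b 0) (b n) := by
  intro n
  induction n with
  | zero => intro h; omega
  | succ m ih =>
    intro _ hmono
    rcases Nat.eq_zero_or_pos m with hm | hm
    · subst hm; simp
    · have h1 : (⋃ i ∈ Finset.range m, Set.Icc (b i) (b (i+1))) = Set.Icc (b 0) (b m) :=
        ih hm (fun i hi => hmono i (by omega))
      have h0m : b 0 ≤ b m := by
        have : (b 0 : ℝ) ∈ Set.Icc (b 0) (b m) := by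
          rw [← h1]
          exact Set.mem_biUnion (Finset.mem_range.mpr hm) ⟨le_refl _, hmono 0 (by omega)⟩
        exact this.2
      rw [show Finset.range (m+1) = insert m (Finset.range m) by
        rw [Finset.range_add_one]]
      rw [Finset.set_biUnion_insert, h1, Set.union_comm,
        Set.Icc_union_Icc_eq_Icc h0m (hmono m (by omega))]

/-- With `f`, `a_i`, `b_i` as in the explicit construction for a general
histogram density with weights `w` and breakpoints `t`: on each interval `I_i = [b_i, b_{i+1}]`
the function `f` is affine with slope `1/w_i` (explicitly `f x = t_i + (x - b_i)/w_i`), maps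
`I_i` onto `[t_i, t_{i+1}]`, and the `I_i` cover `[0,1]`. -/
theorem plf_structure (n : ℕ) (hn : 0 < n) (t w : ℕ → ℝ)
    (ht0 : t 0 = 0) (htn : t n = 1) (htmono : ∀ k < n, t k < t (k+1))
    (hw : ∀ k < n, 0 < w k)
    (hsum : ∑ k ∈ Finset.range n, w k * (t (k+1) - t k) = 1)
    (b : ℕ → ℝ) (hb : ∀ i, b i = ∑ j ∈ Finset.range i, (t (j+1) - t j) * w j)
    (f : ℝ → ℝ)
    (hf : ∀ y, f y = ∑ i ∈ Finset.range n,
      (if i = 0 then 1 / w 0 else 1 / w i - 1 / w (i-1)) * max 0 (y - b i)) :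
    (∀ i < n, ∀ y ∈ Set.Icc (b i) (b (i+1)), f y = t i + (y - b i) / w i) ∧
    (∀ i < n, f '' Set.Icc (b i) (b (i+1)) = Set.Icc (t i) (t (i+1))) ∧
    (⋃ i ∈ Finset.range n, Set.Icc (b i) (b (i+1))) = Set.Icc (0:ℝ) 1 := by
  have hb0 : b 0 = 0 := by simp [hb]
  have hbstep : ∀ i, b (i+1) = b i + (t (i+1) - t i) * w i := by
    intro i; rw [hb, hb, Finset.sum_range_succ]
  have hbn : b n = 1 := by
    rw [hb, ← hsum]
    exact Finset.sum_congr rfl (fun j _ => mul_comm _ _)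
  have hbmono : ∀ i < n, b i ≤ b (i+1) := by
    intro i hi
    rw [hbstep i]
    nlinarith [htmono i hi, hw i hi]
  have hble : ∀ j ≤ n, ∀ i ≤ j, b i ≤ b j := by
    intro j
    induction j with
    | zero => intro _ i hi; have h0 : i = 0 := Nat.le_zero.mp hi; rw [h0]
    | succ k ih =>
      intro hk i hi
      rcases Nat.lt_or_ge i (k+1) with h | h
      · exact le_trans (ih (by omega) i (by omega)) (hbmono k (by omega))
      · have : i = k + 1 := by omega
        subst this; exact le_refl _
  -- the affine formula (all of y)
  have keyS : ∀ i < n, ∀ y : ℝ,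
      (∑ j ∈ Finset.range (i+1),
        (if j = 0 then 1 / w 0 else 1 / w j - 1 / w (j-1)) * (y - b j))
        = t i + (y - b i) / w i := by
    intro i
    induction i with
    | zero =>
      intro _ y
      have hw0 : w 0 ≠ 0 := ne_of_gt (hw 0 hn)
      simp [hb0, ht0]
      field_simp
    | succ k ih =>
      intro hk y
      have hwk : w k ≠ 0 := ne_of_gt (hw k (by omega))
      have hwk1 : w (k+1) ≠ 0 := ne_of_gt (hw (k+1) hk)
      rw [Finset.sum_range_succ, ih (by omega) y]
      have hbs := hbstep k
      simp only [Nat.succ_ne_zero, if_false, Nat.add_sub_cancel]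
      rw [hbs]
      field_simp
      ring
  have part1 : ∀ i < n, ∀ y ∈ Set.Icc (b i) (b (i+1)), f y = t i + (y - b i) / w i := by
    intro i hi y hy
    rw [hf y, ← keyS i hi y]
    rw [← Finset.sum_subset (Finset.range_subset_range.mpr (by omega : i + 1 ≤ n))]
    · refine Finset.sum_congr rfl (fun j hj => ?_)
      have hji : j ≤ i := by simpa using Nat.lt_succ_iff.mp (Finset.mem_range.mp hj)
      have : b j ≤ y := le_trans (hble i (by omega) j hji) hy.1
      rw [max_eq_right (by linarith)]
    · intro j hj hj'
      have hji : i + 1 ≤ j := by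
        simp only [Finset.mem_range] at hj hj'; omega
      have hjn : j ≤ n := by simp only [Finset.mem_range] at hj; omega
      have : y ≤ b j := le_trans hy.2 (hble j hjn (i+1) hji)
      rw [max_eq_left (by linarith), mul_zero]
  refine ⟨part1, ?_, ?_⟩
  · intro i hi
    have hwi : 0 < w i := hw i hi
    have hbs := hbstep i
    ext z
    constructor
    · rintro ⟨y, hy, rfl⟩
      rw [part1 i hi y hy]
      have h1 : 0 ≤ (y - b i) / w i := div_nonneg (by linarith [hy.1]) hwi.le
      have h2 : (y - b i) / w i ≤ t (i+1) - t i := by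
        rw [div_le_iff₀ hwi]
        nlinarith [hy.2]
      constructor <;> linarith
    · intro hz
      refine ⟨b i + (z - t i) * w i, ⟨by nlinarith [hz.1], by nlinarith [hz.2]⟩, ?_⟩
      rw [part1 i hi _ ⟨by nlinarith [hz.1], by nlinarith [hz.2]⟩]
      field_simp
      ring
  · rw [union_consecutive_Icc b n hn hbmono, hb0, hbn]
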